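/- Let f be a barcode with n = Multiset.card f bars and let ℓ₁ ≤ ℓ₂ ≤ … ≤ ℓₙ be the lifespans of its bars listed in nondecreasing order (a monotone enumeration of the multiset of second components of f). Then for every integer p with 1 ≤ p ≤ n, the moment of the critical series of the p-th exterior power is μ(C(f^∧p)) = − Σ_{i=1}^{n−p+1} C(n−i, p−1) · ℓᵢ, where C(n−i, p−1) denotes the binomial coefficient. -/

import Mathlib

noncomputable section

/-- A barcode: a finite multiset of bars `(α, ℓ)` with positive lifespan `ℓ`. -/
def IsBarcode (f : Multiset (ℝ × ℝ)) : Prop := ∀ b ∈ f, (0 : ℝ) < b.2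

/-- The `p`-th exterior power of a barcode: each `p`-element sub-multiset `s`
contributes the bar whose birth grade is the sum of the birth grades in `s`
and whose lifespan is the minimum of the lifespans in `s`. -/
noncomputable def extPow (f : Multiset (ℝ × ℝ)) (p : ℕ) : Multiset (ℝ × ℝ) :=
  (Multiset.powersetCard p f).map
    (fun s => ((s.map Prod.fst).sum, sInf {x : ℝ | x ∈ s.map Prod.snd}))

/-- The birth series `B(f) = Σ_{(α,ℓ)∈f} x^α`. -/
noncomputable def birthSeries (f : Multiset (ℝ × ℝ)) : ℝ →₀ ℤ :=
  (f.map (fun b => Finsupp.single b.1 (1 : ℤ))).sum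

/-- The death series `D(f) = Σ_{(α,ℓ)∈f} x^{α+ℓ}`. -/
noncomputable def deathSeries (f : Multiset (ℝ × ℝ)) : ℝ →₀ ℤ :=
  (f.map (fun b => Finsupp.single (b.1 + b.2) (1 : ℤ))).sum

/-- The critical series `C(f) = B(f) − D(f)`. -/
noncomputable def critSeries (f : Multiset (ℝ × ℝ)) : ℝ →₀ ℤ :=
  birthSeries f - deathSeries f

/-- The lifespan series `L(f) = Σ_{(α,ℓ)∈f} x^ℓ`. -/
noncomputable def lifespanSeries (f : Multiset (ℝ × ℝ)) : ℝ →₀ ℤ :=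
  (f.map (fun b => Finsupp.single b.2 (1 : ℤ))).sum

/-- The drift `Δ(f) = Σ_{(α,ℓ)∈f} α`. -/
noncomputable def drift (f : Multiset (ℝ × ℝ)) : ℝ :=
  (f.map Prod.fst).sum

/-- The moment `μ(P) = Σ_β P(β)·β`. -/
noncomputable def moment (P : ℝ →₀ ℤ) : ℝ :=
  P.sum fun β n => (n : ℝ) * β

/-- The second moment `μ₂(P) = Σ_β P(β)·β²`. -/
noncomputable def moment2 (P : ℝ →₀ ℤ) : ℝ :=
  P.sum fun β n => (n : ℝ) * β ^ 2

end

noncomputable section AuxMoment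

/-- The moment as an additive monoid hom. -/
noncomputable def momentHom : (ℝ →₀ ℤ) →+ ℝ :=
  Finsupp.liftAddHom fun β => (AddMonoidHom.mulRight β).comp (Int.castAddHom ℝ)

lemma moment_eq_momentHom (P : ℝ →₀ ℤ) : moment P = momentHom P := rfl

lemma momentHom_single (a : ℝ) : momentHom (Finsupp.single a 1) = a := by
  simp [momentHom]

lemma moment_sum_single (g : Multiset (ℝ × ℝ)) (h : ℝ × ℝ → ℝ) :
    moment ((g.map (fun b => Finsupp.single (h b) (1 : ℤ))).sum) = (g.map h).sum := by
  rw [moment_eq_momentHom, AddMonoidHom.map_multiset_sum, Multiset.map_map]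
  congr 1
  apply Multiset.map_congr rfl
  intro b _
  exact momentHom_single (h b)

lemma moment_critSeries (g : Multiset (ℝ × ℝ)) :
    moment (critSeries g) = -((g.map Prod.snd).sum) := by
  have hB : moment (birthSeries g) = (g.map Prod.fst).sum :=
    moment_sum_single g Prod.fst
  have hD : moment (deathSeries g) = (g.map (fun b => b.1 + b.2)).sum :=
    moment_sum_single g (fun b => b.1 + b.2)
  have : moment (critSeries g) = moment (birthSeries g) - moment (deathSeries g) := by
    rw [moment_eq_momentHom, moment_eq_momentHom, moment_eq_momentHom, critSeries,
      map_sub]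
  rw [this, hB, hD]
  have : (g.map (fun b : ℝ × ℝ => b.1 + b.2)).sum
      = (g.map Prod.fst).sum + (g.map Prod.snd).sum := by
    rw [← Multiset.sum_map_add]
  rw [this]; ring

lemma key_sum (ℓ : ℕ → ℝ) :
    ∀ (n p : ℕ), 1 ≤ p → (∀ i j : ℕ, i ≤ j → j < n → ℓ i ≤ ℓ j) →
    ((Multiset.powersetCard p (Multiset.range n)).map
        (fun t => sInf {x : ℝ | x ∈ t.map ℓ})).sum
      = ∑ i ∈ Finset.range n, ((n - 1 - i).choose (p - 1) : ℝ) * ℓ i := by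
  intro n
  induction n with
  | zero =>
    intro p hp _
    obtain ⟨q, rfl⟩ := Nat.exists_eq_add_of_le hp
    rw [Nat.add_comm 1 q]
    simp [Multiset.powersetCard_zero_right]
  | succ n IH =>
    intro p hp hmono
    obtain ⟨q, rfl⟩ : ∃ q, p = q + 1 := ⟨p - 1, by omega⟩
    have hmono' : ∀ i j : ℕ, i ≤ j → j < n → ℓ i ≤ ℓ j := fun i j hij hj =>
      hmono i j hij (by omega)
    rw [Multiset.range_succ, Multiset.powersetCard_cons, Multiset.map_add,
      Multiset.sum_add, Multiset.map_map]
    rw [IH (q + 1) hp hmono']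
    rw [Finset.sum_range_succ]
    have hsum2 :
        ((Multiset.powersetCard q (Multiset.range n)).map
          ((fun t => sInf {x : ℝ | x ∈ t.map ℓ}) ∘ Multiset.cons n)).sum
        = if q = 0 then ℓ n
          else ∑ i ∈ Finset.range n, ((n - 1 - i).choose (q - 1) : ℝ) * ℓ i := by
      rcases Nat.eq_zero_or_pos q with hq | hq
      · subst hq
        rw [Multiset.powersetCard_zero_left]
        simp
      · rw [if_neg (by omega)]
        rw [← IH q hq hmono']
        apply congrArg
        apply Multiset.map_congr rfl
        intro t ht
        rw [Multiset.mem_powersetCard] at ht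
        obtain ⟨hle, hcard⟩ := ht
        -- t is nonempty
        have htne : t ≠ 0 := by
          intro h0
          rw [h0] at hcard
          simp at hcard
          omega
        obtain ⟨j, hj⟩ := Multiset.exists_mem_of_ne_zero htne
        have hjn : j < n := by
          have := Multiset.mem_of_le hle hj
          simpa [Multiset.mem_range] using this
        set S : Set ℝ := {x : ℝ | x ∈ t.map ℓ} with hS
        have hSfin : S.Finite := by
          have : S = ↑(t.map ℓ).toFinset := by
            ext x; simp [hS]
          rw [this]; exact (t.map ℓ).toFinset.finite_toSet
        have hSne : S.Nonempty := ⟨ℓ j, by simp [hS]; exact ⟨j, hj, rfl⟩⟩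
        have hSbdd : BddBelow S := hSfin.bddBelow
        have hset : {x : ℝ | x ∈ (n ::ₘ t).map ℓ} = insert (ℓ n) S := by
          ext x; simp [hS, Multiset.mem_map]
        have hle2 : sInf S ≤ ℓ n := by
          refine le_trans (csInf_le hSbdd ?_) (hmono j n (by omega) (by omega))
          simp [hS]; exact ⟨j, hj, rfl⟩
        show sInf {x : ℝ | x ∈ (n ::ₘ t).map ℓ} = sInf S
        rw [hset, csInf_insert hSbdd hSne]
        exact inf_eq_right.mpr hle2
    rw [hsum2]
    rcases Nat.eq_zero_or_pos q with hq | hq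
    · subst hq
      simp [Nat.choose_zero_right]
    · rw [if_neg (by omega)]
      have h0 : ((Nat.choose (n + 1 - 1 - n) (q + 1 - 1) : ℕ) : ℝ) * ℓ n = 0 := by
        have : n + 1 - 1 - n = 0 := by omega
        rw [this, Nat.choose_eq_zero_of_lt (by omega)]
        simp
      rw [h0, add_zero, ← Finset.sum_add_distrib]
      apply Finset.sum_congr rfl
      intro i hi
      rw [Finset.mem_range] at hi
      obtain ⟨r, rfl⟩ : ∃ r, q = r + 1 := ⟨q - 1, by omega⟩
      simp only [Nat.add_sub_cancel]
      have h1 : n - i = (n - 1 - i) + 1 := by omega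
      rw [h1, Nat.choose_succ_succ']
      push_cast
      ring

end AuxMoment

/-- `μ(C(f^∧p)) = − Σ_{i=1}^{n−p+1} (n−i choose p−1) ℓᵢ`, where
`ℓ (i-1)` is the `i`-th smallest lifespan (0-indexed enumeration `ℓ 0 ≤ … ≤ ℓ (n-1)`). -/
theorem moment_critSeries_extPow
    (f : Multiset (ℝ × ℝ)) (hf : IsBarcode f)
    (n : ℕ) (hn : n = Multiset.card f)
    (ℓ : ℕ → ℝ) (hmono : ∀ i j : ℕ, i ≤ j → j < n → ℓ i ≤ ℓ j)
    (hℓ : f.map Prod.snd = (Multiset.range n).map ℓ)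
    (p : ℕ) (hp1 : 1 ≤ p) (hpn : p ≤ n) :
    moment (critSeries (extPow f p)) =
      -∑ i ∈ Finset.range (n - p + 1), ((n - (i + 1)).choose (p - 1) : ℝ) * ℓ i := by
  rw [moment_critSeries]
  have h1 : (extPow f p).map Prod.snd
      = (Multiset.powersetCard p (Multiset.range n)).map
          (fun t => sInf {x : ℝ | x ∈ t.map ℓ}) := by
    rw [extPow, Multiset.map_map]
    calc (Multiset.powersetCard p f).map
          (Prod.snd ∘ fun s => ((s.map Prod.fst).sum, sInf {x : ℝ | x ∈ s.map Prod.snd}))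
        = ((Multiset.powersetCard p f).map (Multiset.map Prod.snd)).map
            (fun m : Multiset ℝ => sInf {x : ℝ | x ∈ m}) := by
          rw [Multiset.map_map]; rfl
      _ = (Multiset.powersetCard p (f.map Prod.snd)).map
            (fun m : Multiset ℝ => sInf {x : ℝ | x ∈ m}) := by
          rw [Multiset.powersetCard_map]
      _ = (Multiset.powersetCard p ((Multiset.range n).map ℓ)).map
            (fun m : Multiset ℝ => sInf {x : ℝ | x ∈ m}) := by rw [hℓ]
      _ = (Multiset.powersetCard p (Multiset.range n)).map
            (fun t => sInf {x : ℝ | x ∈ t.map ℓ}) := by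
          rw [Multiset.powersetCard_map, Multiset.map_map]; rfl
  rw [h1, key_sum ℓ n p hp1 hmono]
  congr 1
  have hz : ∀ i ∈ Finset.range n, i ∉ Finset.range (n - p + 1) →
      (((n - 1 - i).choose (p - 1) : ℕ) : ℝ) * ℓ i = 0 := by
    intro i hi hni
    rw [Finset.mem_range] at hi
    rw [Finset.mem_range, not_lt] at hni
    rw [Nat.choose_eq_zero_of_lt (by omega)]
    simp
  rw [← Finset.sum_subset (Finset.range_subset_range.mpr (by omega : n - p + 1 ≤ n)) hz]
  apply Finset.sum_congr rfl
  intro i _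
  have : n - 1 - i = n - (i + 1) := by omega
  rw [this]
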